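/- arXiv:2409.01130 — 2 statements merged into one kernel-verified Lean document; each statement's English description precedes it below -/
import Mathlib

section
/- Let t, d be positive integers with d ≤ t, let v₁,…,v_t ∈ ℂ^d be vectors such that every d of them are linearly independent (general position), and let u ∈ ℂ^d. Then there exists a d-element subset T ⊆ {1,…,t} such that ⟨u, (∑_{i∈T} |vᵢ⟩⟨vᵢ|)⁻¹ u⟩ ≤ (t−d+1)·⟨u, (∑_{i=1}^t |vᵢ⟩⟨vᵢ|)⁻¹ u⟩. -/
open Matrix BigOperators Finset
open scoped ComplexOrder

theorem detExpand {ι : Type*} [DecidableEq ι] {n : ℕ} (A : Finset ι) (f g : ι → Fin n → ℂ) :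
    Matrix.det (∑ i ∈ A, vecMulVec (f i) (g i)) =
      ∑ r ∈ (Fintype.piFinset (fun _ : Fin n => A)).filter Function.Injective,
        (∏ j, f (r j) j) * Matrix.det (Matrix.of fun j k => g (r j) k) := by
  have h1 : (∑ i ∈ A, vecMulVec (f i) (g i)) = Matrix.of fun j => ∑ i ∈ A, f i j • g i := by
    ext j k; simp [vecMulVec_apply, Matrix.sum_apply, Pi.smul_apply, smul_eq_mul]
  have h2 : Matrix.det (∑ i ∈ A, vecMulVec (f i) (g i)) =
      ∑ r ∈ Fintype.piFinset (fun _ : Fin n => A),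
        (∏ j, f (r j) j) * Matrix.det (Matrix.of fun j k => g (r j) k) := by
    rw [h1]
    have := (Matrix.detRowAlternating (R := ℂ) (n := Fin n)).toMultilinearMap.map_sum_finset
      (g := fun j i => f i j • g i) (A := fun _ : Fin n => A)
    rw [show Matrix.det (Matrix.of fun j => ∑ i ∈ A, f i j • g i)
        = (Matrix.detRowAlternating (R := ℂ) (n := Fin n)).toMultilinearMap
            (fun j => ∑ i ∈ A, f i j • g i) from rfl, this]
    refine Finset.sum_congr rfl fun r _ => ?_
    rw [(Matrix.detRowAlternating (R := ℂ) (n := Fin n)).toMultilinearMap.map_smul_univ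
      (fun j => f (r j) j) (fun j => g (r j))]
    simp only [smul_eq_mul, Matrix.det]
    rfl
  rw [h2, Finset.sum_filter_of_ne]
  intro r _ hne
  by_contra hinj
  rw [Function.not_injective_iff] at hinj
  obtain ⟨a, b, hab, hne'⟩ := hinj
  apply hne
  rw [Matrix.det_zero_of_row_eq hne' (by ext k; simp [hab]), mul_zero]

theorem detCB {ι : Type*} [DecidableEq ι] {n : ℕ} (S : Finset ι) (f g : ι → Fin n → ℂ) :
    Matrix.det (∑ i ∈ S, vecMulVec (f i) (g i)) =
      ∑ T ∈ S.powersetCard n, Matrix.det (∑ i ∈ T, vecMulVec (f i) (g i)) := by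
  rw [detExpand]
  rw [← Finset.sum_fiberwise_of_maps_to (g := fun r : Fin n → ι => Finset.image r Finset.univ)
    (t := S.powersetCard n) ?_ _]
  · refine Finset.sum_congr rfl fun T hT => ?_
    rw [detExpand]
    refine Finset.sum_congr ?_ fun r _ => rfl
    rw [Finset.mem_powersetCard] at hT
    ext r
    simp only [Finset.mem_filter, Fintype.mem_piFinset]
    constructor
    · rintro ⟨⟨_, hinj⟩, himg⟩
      refine ⟨fun j => ?_, hinj⟩
      rw [← himg]
      exact Finset.mem_image_of_mem r (Finset.mem_univ j)
    · rintro ⟨hmem, hinj⟩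
      refine ⟨⟨fun j => hT.1 (hmem j), hinj⟩, ?_⟩
      apply Finset.eq_of_subset_of_card_le
      · intro x hx
        simp only [Finset.mem_image, Finset.mem_univ, true_and] at hx
        obtain ⟨j, rfl⟩ := hx
        exact hmem j
      · rw [Finset.card_image_of_injective _ hinj, Finset.card_univ, Fintype.card_fin, hT.2]
  · intro r hr
    rw [Finset.mem_filter, Fintype.mem_piFinset] at hr
    rw [Finset.mem_powersetCard]
    refine ⟨fun x hx => ?_, ?_⟩
    · simp only [Finset.mem_image, Finset.mem_univ, true_and] at hx
      obtain ⟨j, rfl⟩ := hx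
      exact hr.1 j
    · rw [Finset.card_image_of_injective _ hr.2, Finset.card_univ, Fintype.card_fin]

theorem detSplit {t d : ℕ} (hd : 0 < d) (v : Fin t → Fin d → ℂ) (u : Fin d → ℂ)
    (S : Finset (Fin t)) :
    Matrix.det ((∑ i ∈ S, vecMulVec (v i) (star (v i))) + vecMulVec u (star u)) =
      (∑ T ∈ S.powersetCard d, Matrix.det (∑ i ∈ T, vecMulVec (v i) (star (v i)))) +
      ∑ T ∈ S.powersetCard (d-1),
        Matrix.det ((∑ i ∈ T, vecMulVec (v i) (star (v i))) + vecMulVec u (star u)) := by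
  obtain ⟨e, rfl⟩ : ∃ e, d = e + 1 := ⟨d - 1, (Nat.succ_pred_eq_of_pos hd).symm⟩
  set w : Option (Fin t) → Fin (e+1) → ℂ := fun o => o.elim u v with hw
  have hnone : (none : Option (Fin t)) ∉ S.map Function.Embedding.some := by
    simp [Finset.mem_map]
  have hsum : ∀ T : Finset (Fin t),
      (∑ i ∈ T.map Function.Embedding.some, vecMulVec (w i) (star (w i))) =
        ∑ i ∈ T, vecMulVec (v i) (star (v i)) := by
    intro T; rw [Finset.sum_map]; rfl
  have key := detCB (insert none (S.map Function.Embedding.some)) w (fun i => star (w i))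
  rw [Finset.sum_insert hnone, hsum] at key
  have hL : (∑ i ∈ S, vecMulVec (v i) (star (v i))) + vecMulVec u (star u) =
      vecMulVec (w none) (star (w none)) + ∑ i ∈ S, vecMulVec (v i) (star (v i)) :=
    add_comm _ _
  rw [congrArg Matrix.det hL, key, Finset.powersetCard_succ_insert hnone]
  rw [Finset.sum_union ?hdisj]
  case hdisj =>
    rw [Finset.disjoint_left]
    intro T' hT1 hT2
    rw [Finset.mem_powersetCard] at hT1
    rw [Finset.mem_image] at hT2
    obtain ⟨A, hA, rfl⟩ := hT2
    exact hnone (hT1.1 (Finset.mem_insert_self none A))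
  congr 1
  · rw [Finset.powersetCard_map, Finset.sum_map]
    refine Finset.sum_congr rfl fun T hT => ?_
    rw [RelEmbedding.coe_toEmbedding, Finset.mapEmbedding_apply, hsum]
  · rw [Finset.sum_image ?hinj]
    case hinj =>
      intro A hA B hB hAB
      rw [Finset.mem_coe, Finset.mem_powersetCard] at hA hB
      have hnA : none ∉ A := fun h => hnone (hA.1 h)
      have hnB : none ∉ B := fun h => hnone (hB.1 h)
      ext x
      constructor
      · intro hx
        have : x ∈ insert none B := hAB ▸ Finset.mem_insert_of_mem hx
        rcases Finset.mem_insert.1 this with h | h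
        · exact absurd (h ▸ hx) hnA
        · exact h
      · intro hx
        have : x ∈ insert none A := hAB ▸ Finset.mem_insert_of_mem hx
        rcases Finset.mem_insert.1 this with h | h
        · exact absurd (h ▸ hx) hnB
        · exact h
    rw [Finset.powersetCard_map, Finset.sum_map]
    simp only [Nat.add_sub_cancel]
    refine Finset.sum_congr rfl fun T hT => ?_
    rw [RelEmbedding.coe_toEmbedding, Finset.mapEmbedding_apply,
      Finset.sum_insert (by simp [Finset.mem_map]), hsum]
    exact congrArg Matrix.det (add_comm _ _)

theorem dot_sum {ι : Type*} {d : ℕ} (s : Finset ι) (y : Fin d → ℂ) (f : ι → Fin d → ℂ) :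
    y ⬝ᵥ (∑ i ∈ s, f i) = ∑ i ∈ s, y ⬝ᵥ f i := by
  simp only [dotProduct, Finset.sum_apply, Finset.mul_sum]
  exact Finset.sum_comm

theorem quadForm {t d : ℕ} (v : Fin t → Fin d → ℂ) (T : Finset (Fin t)) (x : Fin d → ℂ) :
    star x ⬝ᵥ (∑ i ∈ T, vecMulVec (v i) (star (v i))) *ᵥ x =
      ∑ i ∈ T, star (star (v i) ⬝ᵥ x) * (star (v i) ⬝ᵥ x) := by
  have h1 : (∑ i ∈ T, vecMulVec (v i) (star (v i))) *ᵥ x =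
      ∑ i ∈ T, ((star (v i) ⬝ᵥ x) • v i) := by
    ext j
    simp only [Matrix.mulVec, dotProduct, Matrix.sum_apply, vecMulVec_apply,
      Finset.sum_apply, Finset.sum_mul, Pi.smul_apply, smul_eq_mul, Finset.mul_sum]
    rw [Finset.sum_comm]
    exact Finset.sum_congr rfl fun i _ => Finset.sum_congr rfl fun k _ => by ring
  rw [h1, dot_sum]
  refine Finset.sum_congr rfl fun i _ => ?_
  rw [dotProduct_smul, smul_eq_mul, star_dotProduct, star_star]
  ring

theorem Mherm {t d : ℕ} (v : Fin t → Fin d → ℂ) (T : Finset (Fin t)) :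
    (∑ i ∈ T, vecMulVec (v i) (star (v i))).IsHermitian := by
  unfold Matrix.IsHermitian
  ext j k
  simp only [Matrix.conjTranspose_apply, Matrix.sum_apply, vecMulVec_apply, star_sum, star_mul',
    star_star, Pi.star_apply]
  exact Finset.sum_congr rfl fun i _ => mul_comm _ _

theorem MposDef {t d : ℕ} (hd : 0 < d) (v : Fin t → Fin d → ℂ) (T : Finset (Fin t))
    (hcard : d ≤ T.card)
    (hgen : ∀ T₀ : Finset (Fin t), T₀.card = d → LinearIndependent ℂ (fun i : T₀ => v i)) :
    (∑ i ∈ T, vecMulVec (v i) (star (v i))).PosDef := by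
  refine Matrix.PosDef.of_dotProduct_mulVec_pos (Mherm v T) fun x hx => ?_
  rw [quadForm]
  obtain ⟨T₀, hT₀sub, hT₀card⟩ := Finset.exists_subset_card_eq hcard
  have hspan := (hgen T₀ hT₀card).span_eq_top_of_card_eq_finrank'
    (by rw [Fintype.card_coe, hT₀card, Module.finrank_fin_fun])
  have hex : ∃ i ∈ T, star (v i) ⬝ᵥ x ≠ 0 := by
    by_contra hall
    push_neg at hall
    have hxmem : x ∈ Submodule.span ℂ (Set.range fun i : T₀ => v i) := hspan ▸ Submodule.mem_top
    rw [Submodule.mem_span_range_iff_exists_fun] at hxmem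
    obtain ⟨c, hc⟩ := hxmem
    apply hx
    rw [← dotProduct_star_self_eq_zero (v := x)]
    calc star x ⬝ᵥ x = star x ⬝ᵥ (∑ i : T₀, c i • v i) := congrArg _ hc.symm
      _ = ∑ i : T₀, c i * (star x ⬝ᵥ v i) := by
            rw [dot_sum]
            exact Finset.sum_congr rfl fun i _ => by rw [dotProduct_smul, smul_eq_mul]
      _ = 0 := by
            refine Finset.sum_eq_zero fun i _ => ?_
            have : star x ⬝ᵥ (v i : Fin d → ℂ) = star (star (v (i : Fin t)) ⬝ᵥ x) := by
              rw [star_dotProduct]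
            rw [this, hall i (hT₀sub i.2), star_zero, mul_zero]
  obtain ⟨i₀, hi₀T, hi₀⟩ := hex
  refine Finset.sum_pos' (fun i _ => star_mul_self_nonneg _) ⟨i₀, hi₀T, ?_⟩
  rw [Complex.star_def, mul_comm, Complex.mul_conj, Complex.zero_lt_real]
  exact Complex.normSq_pos.2 hi₀

theorem detLemma {d : ℕ} (A : Matrix (Fin d) (Fin d) ℂ) (hA : IsUnit A.det) (u : Fin d → ℂ) :
    (A + vecMulVec u (star u)).det = A.det * (1 + star u ⬝ᵥ A⁻¹ *ᵥ u) := by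
  rw [vecMulVec_eq Unit, Matrix.det_add_replicateCol_mul_replicateRow hA]
  congr 1
  rw [Matrix.det_unique]
  simp only [Matrix.add_apply, Matrix.one_apply_eq, Matrix.mul_apply, Matrix.replicateRow_apply,
    Matrix.replicateCol_apply, dotProduct, Matrix.mulVec, Finset.univ_unique,
    Finset.sum_singleton]
  congr 1
  simp only [dotProduct, Finset.mul_sum, Finset.sum_mul]
  rw [Finset.sum_comm]
  exact Finset.sum_congr rfl fun j _ => Finset.sum_congr rfl fun k _ => by ring

theorem countExt {t d : ℕ} (hd : 0 < d) (hdt : d ≤ t) (T' : Finset (Fin t))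
    (h : T'.card = d - 1) :
    ((Finset.univ.powersetCard d).filter (fun T => T' ⊆ T)).card = t - d + 1 := by
  have himg : (Finset.univ.powersetCard d).filter (fun T => T' ⊆ T)
      = T'ᶜ.image (fun x => insert x T') := by
    ext T
    simp only [Finset.mem_filter, Finset.mem_powersetCard, Finset.mem_image, Finset.mem_compl]
    constructor
    · rintro ⟨⟨-, hcard⟩, hsub⟩
      have h1 : (T \ T').Nonempty := by
        rw [← Finset.card_pos, Finset.card_sdiff_of_subset hsub, hcard, h]; omega
      obtain ⟨x, hx⟩ := h1
      rw [Finset.mem_sdiff] at hx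
      refine ⟨x, hx.2, ?_⟩
      apply Finset.eq_of_subset_of_card_le
      · exact Finset.insert_subset hx.1 hsub
      · rw [Finset.card_insert_of_notMem hx.2, h, hcard]; omega
    · rintro ⟨x, hxT', rfl⟩
      refine ⟨⟨Finset.subset_univ _, ?_⟩, Finset.subset_insert _ _⟩
      rw [Finset.card_insert_of_notMem hxT', h]; omega
  rw [himg, Finset.card_image_of_injOn, Finset.card_compl, h, Fintype.card_fin]
  · omega
  · intro a ha b hb hab
    simp only [Finset.mem_coe, Finset.mem_compl] at ha hb
    have hab' : insert a T' = insert b T' := hab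
    have : a ∈ insert b T' := hab' ▸ Finset.mem_insert_self a T'
    rcases Finset.mem_insert.1 this with h' | h'
    · exact h'
    · exact absurd h' ha

theorem pigeon {ι : Type*} (s : Finset ι) (hs : s.Nonempty) (a b : ι → ℝ) :
    ∃ i ∈ s, a i * (∑ j ∈ s, b j) ≤ (∑ j ∈ s, a j) * b i := by
  by_contra hall
  push_neg at hall
  have h := Finset.sum_lt_sum_of_nonempty hs hall
  rw [← Finset.sum_mul, ← Finset.mul_sum] at h
  rw [mul_comm] at h
  exact lt_irrefl _ h

theorem stmt0 (t d : ℕ) (hd : 0 < d) (hdt : d ≤ t)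
    (v : Fin t → (Fin d → ℂ)) (u : Fin d → ℂ)
    (hgen : ∀ T : Finset (Fin t), T.card = d →
      LinearIndependent ℂ (fun i : T => v i)) :
    ∃ T : Finset (Fin t), T.card = d ∧
      star u ⬝ᵥ ((∑ i ∈ T, vecMulVec (v i) (star (v i)))⁻¹).mulVec u ≤
        ((t - d + 1 : ℕ) : ℂ) *
          (star u ⬝ᵥ ((∑ i : Fin t, vecMulVec (v i) (star (v i)))⁻¹).mulVec u) := by
  classical
  set U : Matrix (Fin d) (Fin d) ℂ := vecMulVec u (star u) with hU
  let M : Finset (Fin t) → Matrix (Fin d) (Fin d) ℂ :=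
    fun T => ∑ i ∈ T, vecMulVec (v i) (star (v i))
  let q : Finset (Fin t) → ℂ := fun T => star u ⬝ᵥ (M T)⁻¹ *ᵥ u
  have pd : ∀ T : Finset (Fin t), d ≤ T.card → (M T).PosDef :=
    fun T h => MposDef hd v T h hgen
  set 𝒯 := (Finset.univ : Finset (Fin t)).powersetCard d with h𝒯
  set Pℓ := (Finset.univ : Finset (Fin t)).powersetCard (d - 1) with hPℓ
  have hcard𝒯 : ∀ T ∈ 𝒯, T.card = d := fun T hT => (Finset.mem_powersetCard.1 hT).2
  have pdT : ∀ T ∈ 𝒯, (M T).PosDef := fun T hT => pd T (hcard𝒯 T hT).ge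
  have pdu : (M Finset.univ).PosDef := pd _ (by simp [Finset.card_univ, hdt])
  -- realness of q
  have qre : ∀ T : Finset (Fin t), (M T).PosDef → q T = ((q T).re : ℂ) ∧ 0 ≤ (q T).re := by
    intro T hpd
    have h0 : 0 ≤ q T := hpd.inv.posSemidef.dotProduct_mulVec_nonneg u
    rw [Complex.le_def] at h0
    simp only [Complex.zero_re, Complex.zero_im] at h0
    exact ⟨Complex.ext (by simp) (by simp [← h0.2]), h0.1⟩
  -- realness & positivity of dets
  have dre : ∀ T : Finset (Fin t), (M T).PosDef →
      (M T).det = (((M T).det.re : ℝ) : ℂ) ∧ 0 < (M T).det.re := by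
    intro T hpd
    have h0 : 0 < (M T).det := hpd.det_pos
    rw [Complex.lt_def] at h0
    simp only [Complex.zero_re, Complex.zero_im] at h0
    exact ⟨Complex.ext (by simp) (by simp [← h0.2]), h0.1⟩
  -- determinant lemma per T
  have hdl : ∀ T : Finset (Fin t), (M T).PosDef → (M T + U).det = (M T).det * (1 + q T) :=
    fun T hpd => detLemma (M T) hpd.det_pos.ne'.isUnit u
  -- Cauchy-Binet for univ
  have hC : (M Finset.univ).det = ∑ T ∈ 𝒯, (M T).det :=
    detCB Finset.univ v (fun i => star (v i))
  -- split for univ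
  have hEu : (M Finset.univ + U).det = (∑ T ∈ 𝒯, (M T).det) + ∑ T' ∈ Pℓ, (M T' + U).det :=
    detSplit hd v u Finset.univ
  -- split for each T of card d
  have hET : ∀ T ∈ 𝒯, (M T + U).det =
      (M T).det + ∑ T' ∈ T.powersetCard (d - 1), (M T' + U).det := by
    intro T hT
    have hsing : T.powersetCard d = {T} := by
      rw [← hcard𝒯 T hT]; exact Finset.powersetCard_self T
    have := detSplit hd v u T
    rwa [hsing, Finset.sum_singleton] at this
  -- A) per-T numerator identity
  have hA : ∀ T ∈ 𝒯, (M T).det * q T = ∑ T' ∈ T.powersetCard (d - 1), (M T' + U).det := by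
    intro T hT
    have h1 := hET T hT
    rw [hdl T (pdT T hT)] at h1
    have : (M T).det * (1 + q T) = (M T).det + (M T).det * q T := by ring
    rw [this] at h1
    exact add_left_cancel h1
  -- B) swap and count
  have hB : ∑ T ∈ 𝒯, ∑ T' ∈ T.powersetCard (d - 1), (M T' + U).det
      = ((t - d + 1 : ℕ) : ℂ) * ∑ T' ∈ Pℓ, (M T' + U).det := by
    have hinner : ∀ T ∈ 𝒯, ∑ T' ∈ T.powersetCard (d - 1), (M T' + U).det
        = ∑ T' ∈ Pℓ, if T' ⊆ T then (M T' + U).det else 0 := by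
      intro T hT
      rw [← Finset.sum_filter]
      apply Finset.sum_congr _ fun _ _ => rfl
      ext A
      simp only [Finset.mem_powersetCard, Finset.mem_filter, hPℓ]
      constructor
      · rintro ⟨h1, h2⟩; exact ⟨⟨Finset.subset_univ _, h2⟩, h1⟩
      · rintro ⟨⟨-, h2⟩, h1⟩; exact ⟨h1, h2⟩
    rw [Finset.sum_congr rfl hinner, Finset.sum_comm, Finset.mul_sum]
    refine Finset.sum_congr rfl fun T' hT' => ?_
    rw [← Finset.sum_filter, Finset.sum_const,
      countExt hd hdt T' (Finset.mem_powersetCard.1 hT').2]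
    simp [nsmul_eq_mul]
  -- C) total numerator
  have hCsum : ∑ T' ∈ Pℓ, (M T' + U).det = (M Finset.univ).det * q Finset.univ := by
    have h1 := hEu
    rw [hdl Finset.univ pdu, ← hC] at h1
    have h2 : (M Finset.univ).det * (1 + q Finset.univ)
        = (M Finset.univ).det + (M Finset.univ).det * q Finset.univ := by ring
    rw [h2] at h1
    exact (add_left_cancel h1).symm
  have hkey : ∑ T ∈ 𝒯, (M T).det * q T
      = ((t - d + 1 : ℕ) : ℂ) * ((M Finset.univ).det * q Finset.univ) := by
    rw [Finset.sum_congr rfl hA, hB, hCsum]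
  -- real versions
  set cR : Finset (Fin t) → ℝ := fun T => (M T).det.re with hcR
  set r : Finset (Fin t) → ℝ := fun T => (q T).re with hr
  have hkeyR : ∑ T ∈ 𝒯, cR T * r T = ((t - d + 1 : ℕ) : ℝ) * (cR Finset.univ * r Finset.univ) := by
    apply Complex.ofReal_injective
    calc ((↑(∑ T ∈ 𝒯, cR T * r T)) : ℂ) = ∑ T ∈ 𝒯, (M T).det * q T := by
          push_cast
          exact Finset.sum_congr rfl fun T hT => by
            rw [← (dre T (pdT T hT)).1, ← (qre T (pdT T hT)).1]
      _ = ((t - d + 1 : ℕ) : ℂ) * ((M Finset.univ).det * q Finset.univ) := hkey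
      _ = ↑(((t - d + 1 : ℕ) : ℝ) * (cR Finset.univ * r Finset.univ)) := by
          push_cast
          rw [← (dre Finset.univ pdu).1, ← (qre Finset.univ pdu).1]
  have CRsum : cR Finset.univ = ∑ T ∈ 𝒯, cR T := by
    have := congrArg Complex.re hC
    rwa [Complex.re_sum] at this
  have hcRpos : ∀ T ∈ 𝒯, 0 < cR T := fun T hT => (dre T (pdT T hT)).2
  have hCRpos : 0 < cR Finset.univ := (dre Finset.univ pdu).2
  -- pigeonhole
  have hne : 𝒯.Nonempty := by
    obtain ⟨T₁, hT₁sub, hT₁c⟩ := Finset.exists_subset_card_eq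
      (show d ≤ (Finset.univ : Finset (Fin t)).card by simp [Finset.card_univ, hdt])
    exact ⟨T₁, Finset.mem_powersetCard.2 ⟨hT₁sub, hT₁c⟩⟩
  obtain ⟨T, hTmem, hple⟩ := pigeon 𝒯 hne (fun T => cR T * r T) cR
  rw [← CRsum, hkeyR] at hple
  refine ⟨T, hcard𝒯 T hTmem, ?_⟩
  show q T ≤ ((t - d + 1 : ℕ) : ℂ) * q Finset.univ
  rw [(qre T (pdT T hTmem)).1, (qre Finset.univ pdu).1]
  have hcast : ((t - d + 1 : ℕ) : ℂ) * ((r Finset.univ : ℝ) : ℂ)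
      = ((((t - d + 1 : ℕ) : ℝ) * r Finset.univ : ℝ) : ℂ) := by push_cast; ring
  rw [hcast, Complex.real_le_real]
  nlinarith [hcRpos T hTmem, hCRpos, mul_pos (hcRpos T hTmem) hCRpos]
end

section
/- Let w ∈ ℂ with w ≠ 0 and s > 0. Then ∫_{-1/2}^{1/2}∫_{-1/2}^{1/2} log|w − s(ξ + iη)| dξ dη ≤ log|w| + s²/(12 ln 2 · |w|²), where log is base-2 logarithm. -/
open MeasureTheory Set

/-- `Real.log` is interval integrable on any interval (even through `0`). -/
lemma logIntble (a b : ℝ) : IntervalIntegrable Real.log volume a b := by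
  have H : ∀ c : ℝ, 0 ≤ c → IntervalIntegrable Real.log volume 0 c := by
    intro c hc
    rw [intervalIntegrable_iff_integrableOn_Ioc_of_le hc]
    have hrp : IntervalIntegrable (fun x : ℝ => x ^ (-(1/2) : ℝ)) volume 0 c :=
      intervalIntegral.intervalIntegrable_rpow' (by norm_num)
    have hid : IntervalIntegrable (fun x : ℝ => x) volume 0 c :=
      continuous_id.intervalIntegrable _ _
    rw [intervalIntegrable_iff_integrableOn_Ioc_of_le hc] at hrp hid
    have hb : IntegrableOn (fun x : ℝ => 2 * x ^ (-(1/2) : ℝ) + x) (Ioc 0 c) volume :=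
      (hrp.const_mul 2).add hid
    refine Integrable.mono' hb Real.measurable_log.aestronglyMeasurable ?_
    filter_upwards [ae_restrict_mem measurableSet_Ioc] with x hx
    have hx0 : 0 < x := hx.1
    have hrpnn : (0:ℝ) ≤ x ^ (-(1/2) : ℝ) := Real.rpow_nonneg hx0.le _
    rcases le_total x 1 with hx1 | hx1
    · have hlog : Real.log x ≤ 0 := Real.log_nonpos hx0.le hx1
      rw [Real.norm_eq_abs, abs_of_nonpos hlog]
      have hhalf : (0:ℝ) < x ^ ((1:ℝ)/2) := Real.rpow_pos_of_pos hx0 _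
      have h1 : Real.log (x ^ ((1:ℝ)/2)) = (1/2) * Real.log x := Real.log_rpow hx0 _
      have h2 : Real.log ((x ^ ((1:ℝ)/2))⁻¹) ≤ (x ^ ((1:ℝ)/2))⁻¹ - 1 :=
        Real.log_le_sub_one_of_pos (by positivity)
      rw [Real.log_inv, h1] at h2
      have h3 : (x ^ ((1:ℝ)/2))⁻¹ = x ^ (-(1/2) : ℝ) := by
        rw [← Real.rpow_neg hx0.le]
      rw [h3] at h2
      have hxpos : (0:ℝ) ≤ x := hx0.le
      show -Real.log x ≤ 2 * x ^ (-(1/2) : ℝ) + x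
      linarith
    · have hlog : 0 ≤ Real.log x := Real.log_nonneg hx1
      rw [Real.norm_eq_abs, abs_of_nonneg hlog]
      have h2 : Real.log x ≤ x - 1 := Real.log_le_sub_one_of_pos hx0
      show Real.log x ≤ 2 * x ^ (-(1/2) : ℝ) + x
      linarith
  have key : ∀ c : ℝ, IntervalIntegrable Real.log volume 0 c := by
    intro c
    rcases le_or_gt 0 c with hc | hc
    · exact H c hc
    · have h1 := H (-c) (by linarith)
      have h2 := (IntervalIntegrable.iff_comp_neg (f := Real.log) (a := 0) (b := -c)).mp h1
      simp only [neg_zero, neg_neg, Real.log_neg_eq_log] at h2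
      exact h2
  exact (key a).symm.trans (key b)

/-- Integral of a quadratic polynomial over the centered unit interval. -/
lemma polyint (C D E : ℝ) :
    ∫ x in (-(1/2) : ℝ)..(1/2), (C + D * x + E * x ^ 2) = C + E / 12 := by
  have h1 : IntervalIntegrable (fun x : ℝ => C + D * x) volume (-(1/2)) (1/2) := by
    apply Continuous.intervalIntegrable; continuity
  have h2 : IntervalIntegrable (fun x : ℝ => E * x ^ 2) volume (-(1/2)) (1/2) := by
    apply Continuous.intervalIntegrable; continuity
  have h3 : IntervalIntegrable (fun x : ℝ => D * x) volume (-(1/2)) (1/2) := by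
    apply Continuous.intervalIntegrable; continuity
  rw [intervalIntegral.integral_add h1 h2,
    intervalIntegral.integral_add intervalIntegrable_const h3,
    intervalIntegral.integral_const_mul, intervalIntegral.integral_const_mul,
    integral_id, integral_pow, intervalIntegral.integral_const]
  norm_num
  ring

set_option maxHeartbeats 1000000 in
theorem stmt6 (w : ℂ) (hw : w ≠ 0) (s : ℝ) (hs : 0 < s) :
    (∫ ξ in (-(1/2) : ℝ)..(1/2), ∫ η in (-(1/2) : ℝ)..(1/2),
        Real.logb 2 ‖w - (s : ℂ) * ((ξ : ℂ) + (η : ℂ) * Complex.I)‖) ≤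
      Real.logb 2 ‖w‖ + s^2 / (12 * Real.log 2 * ‖w‖ ^ 2) := by
  have hl2 : 0 < Real.log 2 := Real.log_pos one_lt_two
  have habsw : 0 < ‖w‖ := norm_pos_iff.mpr hw
  set A := w.re with hA
  set B := w.im with hB
  have hR2 : ‖w‖ ^ 2 = A ^ 2 + B ^ 2 := by
    rw [Complex.sq_norm, Complex.normSq_apply]; ring
  have hR2pos : 0 < A ^ 2 + B ^ 2 := hR2 ▸ pow_pos habsw 2
  set c2 : ℝ := 2 * Real.log 2 * (A ^ 2 + B ^ 2) with hc2
  have hc2pos : 0 < c2 := by positivity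
  have hRne : A ^ 2 + B ^ 2 ≠ 0 := hR2pos.ne'
  have hLne : Real.log 2 ≠ 0 := hl2.ne'
  set f : ℝ → ℝ → ℝ := fun ξ η =>
    Real.logb 2 ‖w - (s : ℂ) * ((ξ : ℂ) + (η : ℂ) * Complex.I)‖ with hf
  have hre : ∀ ξ η : ℝ, (w - (s:ℂ) * ((ξ:ℂ) + (η:ℂ) * Complex.I)).re = A - s * ξ := by
    intro ξ η
    simp [Complex.sub_re, Complex.mul_re, Complex.add_re, Complex.add_im,
      Complex.ofReal_re, Complex.ofReal_im, Complex.mul_im, Complex.I_re, Complex.I_im, hA]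
  have him : ∀ ξ η : ℝ, (w - (s:ℂ) * ((ξ:ℂ) + (η:ℂ) * Complex.I)).im = B - s * η := by
    intro ξ η
    simp [Complex.sub_im, Complex.mul_re, Complex.add_re, Complex.add_im,
      Complex.ofReal_re, Complex.ofReal_im, Complex.mul_im, Complex.I_re, Complex.I_im, hB]
  have habs2 : ∀ ξ η : ℝ,
      (‖w - (s:ℂ) * ((ξ:ℂ) + (η:ℂ) * Complex.I)‖) ^ 2
        = (A - s * ξ) ^ 2 + (B - s * η) ^ 2 := by
    intro ξ η
    rw [Complex.sq_norm, Complex.normSq_apply, hre, him]; ring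
  -- key scalar inequality
  have key : ∀ r : ℝ, 0 < r → Real.logb 2 r ≤
      Real.logb 2 (‖w‖) + (r ^ 2 - (A ^ 2 + B ^ 2)) / c2 := by
    intro r hr
    have h1 : Real.log (r ^ 2 / (A ^ 2 + B ^ 2)) ≤ r ^ 2 / (A ^ 2 + B ^ 2) - 1 :=
      Real.log_le_sub_one_of_pos (by positivity)
    rw [Real.log_div (by positivity) (ne_of_gt hR2pos)] at h1
    have h2 : Real.log (r ^ 2) = 2 * Real.log r := by
      rw [Real.log_pow]; push_cast; ring
    have h3 : Real.log (A ^ 2 + B ^ 2) = 2 * Real.log (‖w‖) := by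
      rw [← hR2, Real.log_pow]; push_cast; ring
    rw [h2, h3] at h1
    have h4 : Real.log r - Real.log (‖w‖)
        ≤ (r ^ 2 - (A ^ 2 + B ^ 2)) / (2 * (A ^ 2 + B ^ 2)) := by
      have e : r ^ 2 / (A ^ 2 + B ^ 2) - 1 = (r ^ 2 - (A ^ 2 + B ^ 2)) / (A ^ 2 + B ^ 2) := by
        rw [sub_div, div_self (ne_of_gt hR2pos)]
      rw [e] at h1
      have e2 : (r ^ 2 - (A ^ 2 + B ^ 2)) / (2 * (A ^ 2 + B ^ 2))
          = ((r ^ 2 - (A ^ 2 + B ^ 2)) / (A ^ 2 + B ^ 2)) / 2 := by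
        rw [div_div, mul_comm]
      rw [e2]; linarith
    have h5 : (Real.log r - Real.log (‖w‖)) / Real.log 2
        ≤ ((r ^ 2 - (A ^ 2 + B ^ 2)) / (2 * (A ^ 2 + B ^ 2))) / Real.log 2 :=
      div_le_div_of_nonneg_right h4 hl2.le |>.trans_eq rfl
    have e1 : (Real.log r - Real.log (‖w‖)) / Real.log 2
        = Real.logb 2 r - Real.logb 2 (‖w‖) := by
      rw [Real.logb, Real.logb]; ring
    have e2 : ((r ^ 2 - (A ^ 2 + B ^ 2)) / (2 * (A ^ 2 + B ^ 2))) / Real.log 2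
        = (r ^ 2 - (A ^ 2 + B ^ 2)) / c2 := by
      rw [hc2, div_div, mul_right_comm]
    rw [e1, e2] at h5
    linarith
  -- upper bound function after the inner integration
  set G : ℝ → ℝ := fun ξ =>
    (Real.logb 2 (‖w‖) + s ^ 2 / (12 * c2)) + (-2 * A * s / c2) * ξ
      + (s ^ 2 / c2) * ξ ^ 2 with hG
  have hGcont : Continuous G := by rw [hG]; continuity
  -- slice facts for ξ with A - s ξ ≠ 0
  have slice : ∀ ξ : ℝ, A - s * ξ ≠ 0 →
      Real.logb 2 |A - s * ξ| ≤ (∫ η in (-(1/2) : ℝ)..(1/2), f ξ η) ∧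
      (∫ η in (-(1/2) : ℝ)..(1/2), f ξ η) ≤ G ξ := by
    intro ξ hA0
    have habspos : ∀ η : ℝ, 0 < ‖w - (s:ℂ) * ((ξ:ℂ) + (η:ℂ) * Complex.I)‖ := by
      intro η
      have h1 : |A - s * ξ| ≤ ‖w - (s:ℂ) * ((ξ:ℂ) + (η:ℂ) * Complex.I)‖ := by
        rw [← hre ξ η]; exact Complex.abs_re_le_norm _
      exact lt_of_lt_of_le (abs_pos.mpr hA0) h1
    have hcont0 : Continuous fun η : ℝ =>
        ‖w - (s:ℂ) * ((ξ:ℂ) + (η:ℂ) * Complex.I)‖ :=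
      continuous_norm.comp <| continuous_const.sub <| continuous_const.mul <|
        continuous_const.add (Complex.continuous_ofReal.mul continuous_const)
    have hcont : Continuous fun η : ℝ => f ξ η := by
      rw [show (fun η : ℝ => f ξ η) = fun η : ℝ =>
          Real.log (‖w - (s:ℂ) * ((ξ:ℂ) + (η:ℂ) * Complex.I)‖) / Real.log 2 from rfl]
      apply Continuous.div_const
      refine continuous_iff_continuousAt.mpr fun η => ?_
      exact ContinuousAt.comp (x := η)
        (f := fun η : ℝ => ‖w - (s:ℂ) * ((ξ:ℂ) + (η:ℂ) * Complex.I)‖)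
        (Real.continuousAt_log (ne_of_gt (habspos η))) hcont0.continuousAt
    have hfi : IntervalIntegrable (fun η => f ξ η) volume (-(1/2)) (1/2) :=
      hcont.intervalIntegrable _ _
    constructor
    · -- lower bound
      have hle : ∀ η ∈ Icc (-(1/2) : ℝ) (1/2), Real.logb 2 |A - s * ξ| ≤ f ξ η := by
        intro η _
        refine Real.logb_le_logb_of_le one_lt_two (abs_pos.mpr hA0) ?_
        rw [← hre ξ η]; exact Complex.abs_re_le_norm _
      have h2 := intervalIntegral.integral_mono_on (by norm_num)
        intervalIntegrable_const hfi hle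
      have hconst : (∫ _ in (-(1/2) : ℝ)..(1/2), Real.logb 2 |A - s * ξ|)
          = Real.logb 2 |A - s * ξ| := by
        rw [intervalIntegral.integral_const]; norm_num
      rw [hconst] at h2
      exact h2
    · -- upper bound
      set C : ℝ := Real.logb 2 (‖w‖) + ((A - s * ξ) ^ 2 + B ^ 2 - (A ^ 2 + B ^ 2)) / c2
        with hC
      have hgi : IntervalIntegrable
          (fun η : ℝ => C + (-2 * B * s / c2) * η + (s ^ 2 / c2) * η ^ 2)
          volume (-(1/2)) (1/2) := by
        apply Continuous.intervalIntegrable; continuity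
      have hle : ∀ η ∈ Icc (-(1/2) : ℝ) (1/2),
          f ξ η ≤ C + (-2 * B * s / c2) * η + (s ^ 2 / c2) * η ^ 2 := by
        intro η _
        have h1 := key _ (habspos η)
        rw [habs2 ξ η] at h1
        refine h1.trans_eq ?_
        rw [hC]; ring
      have h2 := intervalIntegral.integral_mono_on (by norm_num) hfi hgi hle
      rw [polyint C (-2 * B * s / c2) (s ^ 2 / c2)] at h2
      refine h2.trans_eq ?_
      rw [hC, hG, hc2]
      field_simp
      ring
  -- almost-everywhere nonvanishing
  have h0 : ∀ᵐ ξ : ℝ ∂volume, A - s * ξ ≠ 0 := by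
    have hset : ({ξ : ℝ | ¬ A - s * ξ ≠ 0} : Set ℝ) = {A / s} := by
      ext ξ
      simp only [mem_setOf_eq, not_not, mem_singleton_iff, sub_eq_zero]
      rw [eq_div_iff hs.ne']
      constructor <;> intro h <;> linarith [h]
    rw [ae_iff, hset]
    exact measure_singleton _
  -- the inner-integral function, set-integral form
  set F : ℝ → ℝ := fun ξ => ∫ η, f ξ η ∂(volume.restrict (Ioc (-(1/2) : ℝ) (1/2))) with hF
  have hFeq : ∀ ξ : ℝ, (∫ η in (-(1/2) : ℝ)..(1/2), f ξ η) = F ξ := fun ξ =>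
    intervalIntegral.integral_of_le (by norm_num)
  have hFmeas : StronglyMeasurable F := by
    apply MeasureTheory.StronglyMeasurable.integral_prod_right
    have : Measurable fun p : ℝ × ℝ =>
        ‖w - (s:ℂ) * ((p.1:ℂ) + (p.2:ℂ) * Complex.I)‖ :=
      (continuous_norm.comp <| continuous_const.sub <| continuous_const.mul <|
        (Complex.continuous_ofReal.comp continuous_fst).add
          ((Complex.continuous_ofReal.comp continuous_snd).mul continuous_const)).measurable
    have hm : Measurable (Function.uncurry f) := by
      rw [show Function.uncurry f = fun p : ℝ × ℝ =>
          Real.log (‖w - (s:ℂ) * ((p.1:ℂ) + (p.2:ℂ) * Complex.I)‖) / Real.log 2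
        from rfl]
      exact (Real.measurable_log.comp this).div_const _
    exact hm.stronglyMeasurable
  -- integrability of F
  have hLo : IntervalIntegrable (fun ξ : ℝ => Real.logb 2 |A - s * ξ|)
      volume (-(1/2)) (1/2) := by
    have h1 := ((logIntble (A + s * (1/2)) (A - s * (1/2))).comp_sub_left A).comp_mul_left (c := s)
    have e1 : (A - (A + s * (1/2))) / s = (-(1/2) : ℝ) := by
      rw [show A - (A + s * (1/2)) = s * (-(1/2)) from by ring,
        mul_div_cancel_left₀ _ hs.ne']
    have e2 : (A - (A - s * (1/2))) / s = (1/2 : ℝ) := by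
      rw [show A - (A - s * (1/2)) = s * (1/2) from by ring,
        mul_div_cancel_left₀ _ hs.ne']
    rw [e1, e2] at h1
    have h2 := h1.div_const (Real.log 2)
    have : (fun ξ : ℝ => Real.logb 2 |A - s * ξ|)
        = fun ξ : ℝ => Real.log (A - s * ξ) / Real.log 2 := by
      funext ξ; rw [Real.logb, Real.log_abs]
    rw [this]
    exact h2
  have hFint : IntervalIntegrable F volume (-(1/2)) (1/2) := by
    rw [intervalIntegrable_iff_integrableOn_Ioc_of_le (by norm_num)]
    have hbint : IntegrableOn
        (fun ξ : ℝ => |Real.logb 2 (|A - s * ξ|)| + |G ξ|) (Ioc (-(1/2) : ℝ) (1/2)) volume := by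
      rw [← intervalIntegrable_iff_integrableOn_Ioc_of_le (by norm_num)]
      exact hLo.abs.add ((hGcont.abs.intervalIntegrable _ _))
    refine Integrable.mono' hbint hFmeas.aestronglyMeasurable ?_
    filter_upwards [ae_restrict_of_ae h0] with ξ hξ
    obtain ⟨hlo, hhi⟩ := slice ξ hξ
    rw [hFeq ξ] at hlo hhi
    rw [Real.norm_eq_abs, abs_le]
    constructor
    · have := neg_abs_le (Real.logb 2 |A - s * ξ|)
      have := abs_nonneg (G ξ)
      linarith
    · have := le_abs_self (G ξ)
      have := abs_nonneg (Real.logb 2 |A - s * ξ|)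
      linarith
  -- outer comparison
  have hGianyi : IntervalIntegrable G volume (-(1/2)) (1/2) := hGcont.intervalIntegrable _ _
  have houter : (∫ ξ in (-(1/2) : ℝ)..(1/2), F ξ) ≤ ∫ ξ in (-(1/2) : ℝ)..(1/2), G ξ := by
    refine intervalIntegral.integral_mono_ae_restrict (by norm_num) hFint hGianyi ?_
    filter_upwards [ae_restrict_of_ae h0] with ξ hξ
    obtain ⟨_, hhi⟩ := slice ξ hξ
    rw [hFeq ξ] at hhi
    exact hhi
  have hGval : (∫ ξ in (-(1/2) : ℝ)..(1/2), G ξ)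
      = Real.logb 2 (‖w‖) + s ^ 2 / (12 * Real.log 2 * ‖w‖ ^ 2) := by
    rw [hG, polyint, hR2, hc2]
    have hRne' := hRne
    generalize hRR : A ^ 2 + B ^ 2 = R at hRne' ⊢
    field_simp
    ring
  calc (∫ ξ in (-(1/2) : ℝ)..(1/2), ∫ η in (-(1/2) : ℝ)..(1/2), f ξ η)
      = ∫ ξ in (-(1/2) : ℝ)..(1/2), F ξ := by
        apply intervalIntegral.integral_congr; intro ξ _; exact hFeq ξ
    _ ≤ ∫ ξ in (-(1/2) : ℝ)..(1/2), G ξ := houter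
    _ = _ := hGval
end
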